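/- Let Γ be a group and (V, μ) an algebraic group over Γ. Suppose V = V_1 ∪ … ∪ V_s is a decomposition of V into irreducible subvarieties with s minimal among all such decompositions. Then the V_i are pairwise disjoint, and the component V_i containing the identity element e is a subgroup of (V, ⊛) of index s (in particular of finite index). -/
import Mathlib


/-- The group of `Γ`-words in `d` variables: the free product `Γ ∗ F(x₁,…,x_d)`. -/
abbrev GWord (Γ : Type) [Group Γ] (d : ℕ) : Type := Monoid.Coprod Γ (FreeGroup (Fin d))

/-- Evaluation of `Γ`-words at a point of `Γ^d`: the homomorphism which is the identity
on `Γ` and sends the `i`-th variable to `v i`. -/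
def evalWord {Γ : Type} [Group Γ] {d : ℕ} (v : Fin d → Γ) : GWord Γ d →* Γ :=
  Monoid.Coprod.lift (MonoidHom.id Γ) (FreeGroup.lift v)

/-- The variety defined by a set `S` of `Γ`-words. -/
def varietyOf {Γ : Type} [Group Γ] {d : ℕ} (S : Set (GWord Γ d)) : Set (Fin d → Γ) :=
  { v | ∀ w ∈ S, evalWord v w = 1 }

/-- A subset of `Γ^d` is a variety if it is the common zero set of a set of `Γ`-words. -/
def IsVariety {Γ : Type} [Group Γ] {d : ℕ} (V : Set (Fin d → Γ)) : Prop :=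
  ∃ S : Set (GWord Γ d), V = varietyOf S

/-- The homomorphism sending a `Γ`-word to the function it defines on `V`. -/
def wordEval {Γ : Type} [Group Γ] {d : ℕ} (V : Set (Fin d → Γ)) : GWord Γ d →* (↥V → Γ) :=
  Pi.monoidHom fun v => evalWord (v : Fin d → Γ)

/-- The group `L_V` of word maps on `V`, as a subgroup of the group of all
functions `V → Γ` (with pointwise multiplication). -/
def LV {Γ : Type} [Group Γ] {d : ℕ} (V : Set (Fin d → Γ)) : Subgroup (↥V → Γ) :=
  (wordEval V).range

/-- The constant functions, as a homomorphism `Γ →* L_V`. -/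
def LV.const {Γ : Type} [Group Γ] {d : ℕ} (V : Set (Fin d → Γ)) : Γ →* ↥(LV V) :=
  (wordEval V).rangeRestrict.comp Monoid.Coprod.inl

/-- The `i`-th coordinate function, an element of `L_V`. -/
def LV.coord {Γ : Type} [Group Γ] {d : ℕ} (V : Set (Fin d → Γ)) (i : Fin d) : ↥(LV V) :=
  (wordEval V).rangeRestrict (Monoid.Coprod.inr (FreeGroup.of i))

/-- The evaluation homomorphism `h_v : L_V →* Γ` at a point `v ∈ V`. -/
def evalAt {Γ : Type} [Group Γ] {d : ℕ} (V : Set (Fin d → Γ)) (v : ↥V) : ↥(LV V) →* Γ :=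
  (Pi.evalMonoidHom (fun _ : ↥V => Γ) v).comp (LV V).subtype

/-- A family of homomorphisms `L →* Γ` is discriminating if every finite subset of `L`
is mapped injectively by some member of the family. -/
def IsDiscriminating {Γ L : Type} [Group Γ] [Group L] (H : Set (L →* Γ)) : Prop :=
  ∀ F : Finset L, ∃ h ∈ H, Set.InjOn h (F : Set L)

/-- A nonempty variety is irreducible if whenever it is a finite union of subvarieties,
one of them is the whole variety. -/
def IsIrreducibleVariety {Γ : Type} [Group Γ] {d : ℕ} (V : Set (Fin d → Γ)) : Prop :=
  IsVariety V ∧ V.Nonempty ∧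
    ∀ (n : ℕ) (W : Fin n → Set (Fin d → Γ)),
      (∀ k, IsVariety (W k)) → (∀ k, W k ⊆ V) → V = ⋃ k, W k → ∃ k, W k = V

/-- A map between varieties is algebraic if each of its coordinates is a word map. -/
def IsAlgebraicMap {Γ : Type} [Group Γ] {d d' : ℕ} (V : Set (Fin d → Γ))
    (V' : Set (Fin d' → Γ)) (F : ↥V → ↥V') : Prop :=
  ∀ i : Fin d', ∃ w : GWord Γ d, ∀ v : ↥V, (F v : Fin d' → Γ) i = evalWord (v : Fin d → Γ) w

/-- A variety is homogeneous if its algebraic automorphisms act transitively. -/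
def IsHomogeneous {Γ : Type} [Group Γ] {d : ℕ} (V : Set (Fin d → Γ)) : Prop :=
  ∀ v v' : ↥V, ∃ F : ↥V ≃ ↥V,
    IsAlgebraicMap V V ⇑F ∧ IsAlgebraicMap V V ⇑F.symm ∧ F v = v'

/-- An algebraic group over `Γ`: a nonempty variety `V ⊆ Γ^d` with a group law
whose coordinates are word maps on `V × V`. -/
structure AlgGroup (Γ : Type) [Group Γ] (d : ℕ) where
  carrier : Set (Fin d → Γ)
  isVariety : IsVariety carrier
  mul : ↥carrier → ↥carrier → ↥carrier
  one : ↥carrier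
  inv : ↥carrier → ↥carrier
  mul_assoc : ∀ a b c, mul (mul a b) c = mul a (mul b c)
  one_mul : ∀ a, mul one a = a
  mul_one : ∀ a, mul a one = a
  inv_mul : ∀ a, mul (inv a) a = one
  algebraic : ∀ i : Fin d, ∃ w : GWord Γ (d + d), ∀ a b : ↥carrier,
    (mul a b : Fin d → Γ) i = evalWord (Fin.append (a : Fin d → Γ) (b : Fin d → Γ)) w

/-- The group structure on the points of an algebraic group. -/
instance AlgGroup.group {Γ : Type} [Group Γ] {d : ℕ} (G : AlgGroup Γ d) :
    Group ↥G.carrier where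
  mul := G.mul
  one := G.one
  inv := G.inv
  mul_assoc := G.mul_assoc
  one_mul := G.one_mul
  mul_one := G.mul_one
  inv_mul_cancel := G.inv_mul

/-- The `Γ`-generating set of `L_V` consisting of the coordinate functions, their
inverses, and the nontrivial constants. -/
def LV.genSet {Γ : Type} [Group Γ] {d : ℕ} (V : Set (Fin d → Γ)) : Set ↥(LV V) :=
  {f | (∃ i, f = LV.coord V i ∨ f = (LV.coord V i)⁻¹) ∨ ∃ γ : Γ, γ ≠ 1 ∧ f = LV.const V γ}

/-- The length of an element of `L_V`: the minimal length of a word in the coordinate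
functions, their inverses, and nontrivial constants representing it. -/
noncomputable def LV.len {Γ : Type} [Group Γ] {d : ℕ} (V : Set (Fin d → Γ))
    (f : ↥(LV V)) : ℕ :=
  sInf {n | ∃ l : List ↥(LV V), l.length = n ∧ (∀ g ∈ l, g ∈ LV.genSet V) ∧ l.prod = f}

namespace Stmt14Aux

variable {Γ : Type} [Group Γ] {d : ℕ}

noncomputable def substHom {n : ℕ} (f : Fin n → GWord Γ d) : GWord Γ n →* GWord Γ d :=
  Monoid.Coprod.lift Monoid.Coprod.inl (FreeGroup.lift f)

lemma evalWord_substHom {n : ℕ} (f : Fin n → GWord Γ d) (v : Fin d → Γ) (w : GWord Γ n) :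
    evalWord v (substHom f w) = evalWord (fun j => evalWord v (f j)) w := by
  have h : (evalWord v).comp (substHom f) = evalWord (fun j => evalWord v (f j)) := by
    apply Monoid.Coprod.hom_ext
    · ext γ
      simp [substHom, evalWord]
    · apply FreeGroup.ext_hom
      intro j
      simp [substHom, evalWord]
  exact DFunLike.congr_fun h w

lemma isVariety_pull {V W : Set (Fin d → Γ)} (hV : IsVariety V) (hW : IsVariety W)
    (u : Fin d → GWord Γ d) :
    IsVariety {v | v ∈ V ∧ (fun i => evalWord v (u i)) ∈ W} := by
  obtain ⟨S, rfl⟩ := hV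
  obtain ⟨T, rfl⟩ := hW
  refine ⟨S ∪ (substHom u) '' T, ?_⟩
  ext v
  simp only [varietyOf, Set.mem_setOf_eq, Set.mem_union, Set.mem_image]
  constructor
  · rintro ⟨h1, h2⟩ w (hw | ⟨t, ht, rfl⟩)
    · exact h1 w hw
    · rw [evalWord_substHom]; exact h2 t ht
  · intro h
    exact ⟨fun w hw => h w (Or.inl hw),
      fun t ht => by rw [← evalWord_substHom]; exact h _ (Or.inr ⟨t, ht, rfl⟩)⟩

lemma isVariety_inter {A B : Set (Fin d → Γ)} (hA : IsVariety A) (hB : IsVariety B) :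
    IsVariety (A ∩ B) := by
  obtain ⟨S, rfl⟩ := hA
  obtain ⟨T, rfl⟩ := hB
  refine ⟨S ∪ T, ?_⟩
  ext v
  simp only [varietyOf, Set.mem_inter_iff, Set.mem_setOf_eq, Set.mem_union]
  constructor
  · rintro ⟨h1, h2⟩ w (hw | hw)
    · exact h1 w hw
    · exact h2 w hw
  · exact fun h => ⟨fun w hw => h w (Or.inl hw), fun w hw => h w (Or.inr hw)⟩

lemma isVariety_inter_iInter {ι : Sort*} {V : Set (Fin d → Γ)} (hV : IsVariety V)
    {W : ι → Set (Fin d → Γ)} (hW : ∀ i, IsVariety (W i)) :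
    IsVariety (V ∩ ⋂ i, W i) := by
  obtain ⟨S, rfl⟩ := hV
  choose T hT using hW
  refine ⟨S ∪ ⋃ i, T i, ?_⟩
  ext v
  simp only [varietyOf, Set.mem_inter_iff, Set.mem_iInter, Set.mem_setOf_eq, Set.mem_union,
    Set.mem_iUnion]
  constructor
  · rintro ⟨h1, h2⟩ w (hw | ⟨i, hw⟩)
    · exact h1 w hw
    · have := h2 i
      rw [hT i] at this
      exact this w hw
  · intro h
    refine ⟨fun w hw => h w (Or.inl hw), fun i => ?_⟩
    rw [hT i]
    exact fun w hw => h w (Or.inr ⟨i, hw⟩)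

lemma mul_coord_left (G : AlgGroup Γ d) (g : ↥G.carrier) :
    ∃ u : Fin d → GWord Γ d, ∀ (x : ↥G.carrier) (i : Fin d),
      ((g * x : ↥G.carrier) : Fin d → Γ) i = evalWord (x : Fin d → Γ) (u i) := by
  choose w hw using G.algebraic
  set f : Fin (d + d) → GWord Γ d :=
    Fin.append (fun j => Monoid.Coprod.inl ((g : Fin d → Γ) j))
      (fun j => Monoid.Coprod.inr (FreeGroup.of j)) with hf
  refine ⟨fun i => substHom f (w i), fun x i => ?_⟩
  rw [evalWord_substHom]
  have hfe : (fun j => evalWord (x : Fin d → Γ) (f j))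
      = Fin.append (g : Fin d → Γ) (x : Fin d → Γ) := by
    funext j
    refine Fin.addCases (fun j => ?_) (fun j => ?_) j
    · simp [hf, Fin.append_left, evalWord]
    · have : f (Fin.natAdd d j) = Monoid.Coprod.inr (FreeGroup.of j) := by
        rw [hf, Fin.append_right]
      rw [this, Fin.append_right]
      simp [evalWord]
  rw [hfe]
  exact hw i g x

lemma mul_coord_right (G : AlgGroup Γ d) (x : ↥G.carrier) :
    ∃ u : Fin d → GWord Γ d, ∀ (g : ↥G.carrier) (i : Fin d),
      ((g * x : ↥G.carrier) : Fin d → Γ) i = evalWord (g : Fin d → Γ) (u i) := by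
  choose w hw using G.algebraic
  set f : Fin (d + d) → GWord Γ d :=
    Fin.append (fun j => Monoid.Coprod.inr (FreeGroup.of j))
      (fun j => Monoid.Coprod.inl ((x : Fin d → Γ) j)) with hf
  refine ⟨fun i => substHom f (w i), fun g i => ?_⟩
  rw [evalWord_substHom]
  have hfe : (fun j => evalWord (g : Fin d → Γ) (f j))
      = Fin.append (g : Fin d → Γ) (x : Fin d → Γ) := by
    funext j
    refine Fin.addCases (fun j => ?_) (fun j => ?_) j
    · simp [hf, Fin.append_left, evalWord]
    · have : f (Fin.natAdd d j) = Monoid.Coprod.inl ((x : Fin d → Γ) j) := by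
        rw [hf, Fin.append_right]
      rw [this, Fin.append_right]
      simp [evalWord]
  rw [hfe]
  exact hw i g x

end Stmt14Aux

/-- the irreducible components of an algebraic group are pairwise
disjoint, and the component of the identity is a subgroup of index `s`. -/
theorem stmt_14 {Γ : Type} [Group Γ] {d : ℕ} (G : AlgGroup Γ d) (s : ℕ)
    (W : Fin s → Set (Fin d → Γ))
    (hW : ∀ k, IsIrreducibleVariety (W k)) (hsub : ∀ k, W k ⊆ G.carrier)
    (hcover : G.carrier = ⋃ k, W k)
    (hmin : ∀ (t : ℕ) (W' : Fin t → Set (Fin d → Γ)),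
      (∀ k, IsIrreducibleVariety (W' k)) → (∀ k, W' k ⊆ G.carrier) →
      G.carrier = ⋃ k, W' k → s ≤ t) :
    (∀ k l, k ≠ l → W k ∩ W l = ∅) ∧
    ∃ k₀ : Fin s, (G.one : Fin d → Γ) ∈ W k₀ ∧
      ∃ H : Subgroup ↥G.carrier,
        (H : Set ↥G.carrier) = {v : ↥G.carrier | (v : Fin d → Γ) ∈ W k₀} ∧
        H.index = s := by
  classical
  have hmemU : ∀ g : ↥G.carrier, ∃ k, (g : Fin d → Γ) ∈ W k := fun g =>
    Set.mem_iUnion.mp (by rw [← hcover]; exact g.2)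
  -- minimality: no component is contained in another
  have hnc : ∀ k l : Fin s, k ≠ l → ¬ (W k ⊆ W l) := by
    intro k l hkl hsubkl
    obtain ⟨n, rfl⟩ : ∃ n, s = n + 1 := ⟨s - 1, (Nat.succ_pred_eq_of_pos k.pos).symm⟩
    have hcov' : G.carrier = ⋃ m, W (k.succAbove m) := by
      apply Set.Subset.antisymm
      · intro v hv
        rw [hcover] at hv
        obtain ⟨m, hm⟩ := Set.mem_iUnion.mp hv
        by_cases hmk : m = k
        · subst hmk
          have hvl : v ∈ W l := hsubkl hm
          obtain ⟨j, hj⟩ := Fin.exists_succAbove_eq (Ne.symm hkl)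
          exact Set.mem_iUnion.mpr ⟨j, by rw [hj]; exact hvl⟩
        · obtain ⟨j, hj⟩ := Fin.exists_succAbove_eq hmk
          exact Set.mem_iUnion.mpr ⟨j, by rw [hj]; exact hm⟩
      · exact Set.iUnion_subset fun j => hsub _
    have := hmin n (fun m => W (k.succAbove m)) (fun m => hW _) (fun m => hsub _) hcov'
    omega
  -- translation maps each component into some component
  have hsig : ∀ (g : ↥G.carrier) (l : Fin s), ∃ k : Fin s,
      ∀ x : ↥G.carrier, (x : Fin d → Γ) ∈ W l →
        ((g * x : ↥G.carrier) : Fin d → Γ) ∈ W k := by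
    intro g l
    obtain ⟨u, hu⟩ := Stmt14Aux.mul_coord_left G g
    set D : Fin s → Set (Fin d → Γ) := fun k =>
      W l ∩ {v | v ∈ G.carrier ∧ (fun i => evalWord v (u i)) ∈ W k} with hD
    have hDvar : ∀ k, IsVariety (D k) := fun k =>
      Stmt14Aux.isVariety_inter (hW l).1 (Stmt14Aux.isVariety_pull G.isVariety (hW k).1 u)
    have hcov : W l = ⋃ k, D k := by
      apply Set.Subset.antisymm
      · intro v hv
        have hvV : v ∈ G.carrier := hsub l hv
        set x : ↥G.carrier := ⟨v, hvV⟩ with hx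
        obtain ⟨k, hk⟩ := hmemU (g * x)
        refine Set.mem_iUnion.mpr ⟨k, hv, hvV, ?_⟩
        have heq : (fun i => evalWord v (u i)) = ((g * x : ↥G.carrier) : Fin d → Γ) := by
          funext i
          exact (hu x i).symm
        rw [heq]
        exact hk
      · exact Set.iUnion_subset fun k => Set.inter_subset_left
    obtain ⟨k, hk⟩ := (hW l).2.2 s D hDvar (fun k => Set.inter_subset_left) hcov
    refine ⟨k, fun x hx => ?_⟩
    rw [← hk] at hx
    obtain ⟨-, -, hmem⟩ := hx
    have heq : ((g * x : ↥G.carrier) : Fin d → Γ) = fun i => evalWord (x : Fin d → Γ) (u i) :=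
      funext (hu x)
    rw [heq]
    exact hmem
  -- the identity lies in some component
  obtain ⟨k₀, hk₀⟩ := hmemU (1 : ↥G.carrier)
  -- the identity lies in a unique component
  have huniq : ∀ a b : Fin s, ((1 : ↥G.carrier) : Fin d → Γ) ∈ W a →
      ((1 : ↥G.carrier) : Fin d → Γ) ∈ W b → a = b := by
    intro a b ha hb
    by_contra hab
    choose u hu using fun x : ↥G.carrier => Stmt14Aux.mul_coord_right G x
    set B : Fin s → Set (Fin d → Γ) := fun m =>
      G.carrier ∩ ⋂ x : {x : ↥G.carrier // (x : Fin d → Γ) ∈ W b},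
        {v | v ∈ G.carrier ∧ (fun i => evalWord v (u x.1 i)) ∈ W m} with hB
    have hBvar : ∀ m, IsVariety (B m) := fun m =>
      Stmt14Aux.isVariety_inter_iInter G.isVariety
        (fun x => Stmt14Aux.isVariety_pull G.isVariety (hW m).1 _)
    have hBmem : ∀ (g : ↥G.carrier) (m : Fin s), (g : Fin d → Γ) ∈ B m ↔
        ∀ x : ↥G.carrier, (x : Fin d → Γ) ∈ W b →
          ((g * x : ↥G.carrier) : Fin d → Γ) ∈ W m := by
      intro g m
      constructor
      · rintro ⟨-, hg⟩ x hx
        obtain ⟨-, hm⟩ := Set.mem_iInter.mp hg ⟨x, hx⟩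
        have heq : ((g * x : ↥G.carrier) : Fin d → Γ)
            = fun i => evalWord (g : Fin d → Γ) (u x i) := funext (hu x g)
        rw [heq]
        exact hm
      · intro h
        refine ⟨g.2, Set.mem_iInter.mpr fun x => ⟨g.2, ?_⟩⟩
        have heq : (fun i => evalWord (g : Fin d → Γ) (u x.1 i))
            = ((g * x.1 : ↥G.carrier) : Fin d → Γ) := (funext (hu x.1 g)).symm
        rw [heq]
        exact h x.1 x.2
    have hcov : W a = ⋃ m, (W a ∩ B m) := by
      apply Set.Subset.antisymm
      · intro v hv
        set g : ↥G.carrier := ⟨v, hsub a hv⟩ with hg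
        obtain ⟨m, hm⟩ := hsig g b
        exact Set.mem_iUnion.mpr ⟨m, hv, (hBmem g m).mpr hm⟩
      · exact Set.iUnion_subset fun m => Set.inter_subset_left
    obtain ⟨m, hm⟩ := (hW a).2.2 s _
      (fun m => Stmt14Aux.isVariety_inter (hW a).1 (hBvar m))
      (fun m => Set.inter_subset_left) hcov
    rw [← hm] at ha
    have h1B : ((1 : ↥G.carrier) : Fin d → Γ) ∈ B m := ha.2
    have hWbm : W b ⊆ W m := by
      intro v hv
      have := (hBmem 1 m).mp h1B ⟨v, hsub b hv⟩ hv
      rwa [one_mul] at this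
    have hmb : m = b := by
      by_contra h'
      exact hnc b m (Ne.symm h') hWbm
    have hab' : W a ⊆ W b := by
      intro v hv
      rw [← hm] at hv
      set g : ↥G.carrier := ⟨v, hsub a hv.1⟩ with hg
      have := (hBmem g m).mp hv.2 1 hb
      rwa [mul_one, hmb] at this
    exact hnc a b hab hab'
  -- pairwise disjointness
  have hdis : ∀ k l : Fin s, k ≠ l → W k ∩ W l = ∅ := by
    intro k l hkl
    by_contra h
    obtain ⟨v, hvk, hvl⟩ := Set.nonempty_iff_ne_empty.mpr h
    set p : ↥G.carrier := ⟨v, hsub k hvk⟩ with hp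
    obtain ⟨k', hk'⟩ := hsig p⁻¹ k
    obtain ⟨l', hl'⟩ := hsig p⁻¹ l
    have h1k' : ((1 : ↥G.carrier) : Fin d → Γ) ∈ W k' := by
      have := hk' p hvk
      rwa [inv_mul_cancel] at this
    have h1l' : ((1 : ↥G.carrier) : Fin d → Γ) ∈ W l' := by
      have := hl' p hvl
      rwa [inv_mul_cancel] at this
    have hkl' : k' = l' := huniq _ _ h1k' h1l'
    subst hkl'
    obtain ⟨m, hm⟩ := hsig p k'
    have hkm : W k ⊆ W m := by
      intro y hy
      have h1 := hk' ⟨y, hsub k hy⟩ hy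
      have h2 := hm _ h1
      rwa [← mul_assoc, mul_inv_cancel, one_mul] at h2
    have hlm : W l ⊆ W m := by
      intro y hy
      have h1 := hl' ⟨y, hsub l hy⟩ hy
      have h2 := hm _ h1
      rwa [← mul_assoc, mul_inv_cancel, one_mul] at h2
    have hkm' : k = m := by
      by_contra h'
      exact hnc k m h' hkm
    have hlm' : l = m := by
      by_contra h'
      exact hnc l m h' hlm
    exact hkl (hkm'.trans hlm'.symm)
  -- the subgroup
  have hmulmem : ∀ a b : ↥G.carrier, (a : Fin d → Γ) ∈ W k₀ → (b : Fin d → Γ) ∈ W k₀ →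
      ((a * b : ↥G.carrier) : Fin d → Γ) ∈ W k₀ := by
    intro a b ha hb
    obtain ⟨m, hm⟩ := hsig a k₀
    have haa : (a : Fin d → Γ) ∈ W m := by
      have := hm 1 hk₀
      rwa [mul_one] at this
    have hmk : m = k₀ := by
      by_contra h'
      exact Set.eq_empty_iff_forall_notMem.mp (hdis m k₀ h') _ ⟨haa, ha⟩
    subst hmk
    exact hm b hb
  have hinvmem : ∀ a : ↥G.carrier, (a : Fin d → Γ) ∈ W k₀ →
      ((a⁻¹ : ↥G.carrier) : Fin d → Γ) ∈ W k₀ := by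
    intro a ha
    obtain ⟨m, hm⟩ := hsig a⁻¹ k₀
    have h1 : ((1 : ↥G.carrier) : Fin d → Γ) ∈ W m := by
      have := hm a ha
      rwa [inv_mul_cancel] at this
    have hmk : m = k₀ := huniq m k₀ h1 hk₀
    subst hmk
    have := hm 1 hk₀
    rwa [mul_one] at this
  set H : Subgroup ↥G.carrier :=
    { carrier := {g : ↥G.carrier | (g : Fin d → Γ) ∈ W k₀}
      one_mem' := hk₀
      mul_mem' := fun {a b} ha hb => hmulmem a b ha hb
      inv_mem' := fun {a} ha => hinvmem a ha } with hH
  have hmemH : ∀ g : ↥G.carrier, g ∈ H ↔ (g : Fin d → Γ) ∈ W k₀ := fun g => Iff.rfl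
  refine ⟨hdis, k₀, hk₀, H, rfl, ?_⟩
  -- the component function
  choose c hc using hmemU
  have hcu : ∀ (g : ↥G.carrier) (k : Fin s), (g : Fin d → Γ) ∈ W k → c g = k := by
    intro g k h
    by_contra h'
    exact Set.eq_empty_iff_forall_notMem.mp (hdis _ _ h') _ ⟨hc g, h⟩
  have hcos : ∀ g g' : ↥G.carrier, g⁻¹ * g' ∈ H ↔ c g = c g' := by
    intro g g'
    constructor
    · intro h
      obtain ⟨m, hm⟩ := hsig g k₀
      have hg : (g : Fin d → Γ) ∈ W m := by
        have := hm 1 hk₀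
        rwa [mul_one] at this
      have hg' : (g' : Fin d → Γ) ∈ W m := by
        have := hm (g⁻¹ * g') ((hmemH _).mp h)
        rwa [← mul_assoc, mul_inv_cancel, one_mul] at this
      rw [hcu g m hg, hcu g' m hg']
    · intro h
      obtain ⟨m, hm⟩ := hsig g⁻¹ (c g)
      have h1 : ((1 : ↥G.carrier) : Fin d → Γ) ∈ W m := by
        have := hm g (hc g)
        rwa [inv_mul_cancel] at this
      have hmk : m = k₀ := huniq _ _ h1 hk₀
      subst hmk
      exact (hmemH _).mpr (hm g' (h ▸ hc g'))
  have hcsurj : ∀ k : Fin s, ∃ g : ↥G.carrier, c g = k := by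
    intro k
    obtain ⟨v, hv⟩ := (hW k).2.1
    exact ⟨⟨v, hsub k hv⟩, hcu _ k hv⟩
  -- compute the index via the component function
  set f : (↥G.carrier ⧸ H) → Fin s :=
    Quotient.lift c (fun a b hab => (hcos a b).mp (QuotientGroup.leftRel_apply.mp hab)) with hf
  have hfbij : Function.Bijective f := by
    constructor
    · intro q q'
      refine Quotient.inductionOn₂ q q' ?_
      intro a b hEq
      exact Quotient.sound (QuotientGroup.leftRel_apply.mpr ((hcos a b).mpr hEq))
    · intro k
      obtain ⟨g, hg⟩ := hcsurj k
      exact ⟨Quotient.mk _ g, hg⟩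
  show Nat.card (↥G.carrier ⧸ H) = s
  rw [Nat.card_congr (Equiv.ofBijective f hfbij), Nat.card_eq_fintype_card, Fintype.card_fin]
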